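/- Let T: X ⇉ X* be set-valued, ε ≥ 0, ρ ≥ 0, and let T^e(ε, x) := {u : ⟨y−x, v−u⟩ ≥ −ε for all (y,v) ∈ gph T} be the ε-enlargement of T. Then for every x, the Bregman–Yosida regularization of the enlargement is contained in the enlargement of the Bregman–Yosida regularization: (T^e(ε,·))_ρ(x) ⊆ (T_ρ)^e(ε, x), where S_ρ := (ρ∇φ* + S⁻¹)⁻¹. -/
import Mathlib


open scoped RealInnerProductSpace

/-- The Bregman–Yosida regularization of the ε-enlargement is contained in the
ε-enlargement of the Bregman–Yosida regularization:
`(T^e(ε,·))_ρ(x) ⊆ (T_ρ)^e(ε, x)`. -/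
theorem stmt18 {X : Type*} [NormedAddCommGroup X] [InnerProductSpace ℝ X] [CompleteSpace X]
    (φ : X → ℝ) (gφ gφs : X → X)
    (hconv : StrictConvexOn ℝ Set.univ φ)
    (hgrad : ∀ x, HasGradientAt φ (gφ x) x)
    (hsc : Filter.Tendsto (fun x => φ x / ‖x‖) (Filter.cocompact X) Filter.atTop)
    (hinv1 : Function.LeftInverse gφs gφ)
    (hinv2 : Function.RightInverse gφs gφ)
    (hsmono : ∀ u w : X, u ≠ w → 0 < ⟪gφs u - gφs w, u - w⟫)
    (T : X → Set X) (ε ρ : ℝ) (hε : 0 ≤ ε) (hρ : 0 ≤ ρ) :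
    ∀ x : X,
      {u : X | ∀ y v : X, v ∈ T y → -ε ≤ ⟪y - (x - ρ • gφs u), v - u⟫} ⊆
        {u : X | ∀ y v : X, v ∈ T (y - ρ • gφs v) → -ε ≤ ⟪y - x, v - u⟫} := by
  intro x u hu y v hv
  have h := hu (y - ρ • gφs v) v hv
  rcases eq_or_ne v u with h' | h'
  · simp [h']
    positivity
  · have hm : 0 < ⟪gφs v - gφs u, v - u⟫ := hsmono v u h'
    have key : ⟪y - ρ • gφs v - (x - ρ • gφs u), v - u⟫
        = ⟪y - x, v - u⟫ - ρ * ⟪gφs v - gφs u, v - u⟫ := by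
      rw [show y - ρ • gφs v - (x - ρ • gφs u) = (y - x) - ρ • (gφs v - gφs u) by
        simp [smul_sub]; abel]
      rw [inner_sub_left, real_inner_smul_left]
    rw [key] at h
    nlinarith [mul_nonneg hρ hm.le]
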